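/- arXiv:1103.4435 — 3 statements merged into one kernel-verified Lean document; each statement's English description precedes it below -/
import Mathlib

section
/- Let q be a prime, n ≥ 1, d ≥ 2, r ≥ 0, m ≥ 1, let T* be a fixed (n;d)-tensor over 𝔽_q of rank at most r, and let M^{(1)},…,M^{(m)} be i.i.d. uniformly distributed (n;d)-tensors over 𝔽_q. Then the probability of the error event E — that there exists a tensor T ≠ T* of rank at most r with y_T = y_{T*} — satisfies Pr(E) ≤ q^{−(m − n·r·d)}. -/
/-- An `(n;d)`-tensor over `𝔽_q`: a map `[n]^d → 𝔽_q`. -/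
abbrev Tensor (q n d : ℕ) := (Fin d → Fin n) → ZMod q

/-- `T` has rank at most `r` if it is a sum of `r` outer products of vectors. -/
def rankLE (q n d r : ℕ) (T : Tensor q n d) : Prop :=
  ∃ u : Fin r → Fin d → (Fin n → ZMod q),
    ∀ idx : Fin d → Fin n, T idx = ∑ i : Fin r, ∏ j : Fin d, u i j (idx j)

/-- The tensor inner product `⟨M, T⟩ = Σ_idx M(idx)·T(idx)`. -/
def tinner {q n d : ℕ} [Fact q.Prime] (M T : Tensor q n d) : ZMod q :=
  ∑ idx : Fin d → Fin n, M idx * T idx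

/-- The inner product with a fixed tensor, as an additive monoid hom in the first argument. -/
def tmap {q n d : ℕ} [Fact q.Prime] (S : Tensor q n d) : Tensor q n d →+ ZMod q :=
  AddMonoidHom.mk' (fun N => tinner N S) (by
    intro a b
    simp [tinner, add_mul, Finset.sum_add_distrib])

lemma tmap_surj {q n d : ℕ} [Fact q.Prime] (S : Tensor q n d) (hS : S ≠ 0) :
    Function.Surjective (tmap S) := by
  obtain ⟨idx₀, h0⟩ : ∃ idx, S idx ≠ 0 := by
    by_contra h; push_neg at h; exact hS (funext h)
  intro y
  refine ⟨fun idx => if idx = idx₀ then y * (S idx₀)⁻¹ else 0, ?_⟩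
  show tinner _ S = y
  rw [tinner, Finset.sum_eq_single idx₀]
  · rw [if_pos rfl, mul_assoc, inv_mul_cancel₀ h0, mul_one]
  · intro b _ hb; rw [if_neg hb, zero_mul]
  · intro h; exact absurd (Finset.mem_univ _) h

lemma tinner_sub {q n d : ℕ} [Fact q.Prime] (M T T' : Tensor q n d) :
    tinner M (T - T') = tinner M T - tinner M T' := by
  simp [tinner, mul_sub, Finset.sum_sub_distrib]

lemma card_ker {q n d : ℕ} [Fact q.Prime] (S : Tensor q n d) (hS : S ≠ 0) :
    Nat.card {N : Tensor q n d // tinner N S = 0} = q ^ (n ^ d - 1) := by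
  have hq : q.Prime := Fact.out
  have hnd : 1 ≤ n ^ d := by
    rcases Nat.eq_zero_or_pos (n ^ d) with h | h
    · exfalso
      have : IsEmpty (Fin d → Fin n) := by
        rw [pow_eq_zero_iff'] at h
        have : n = 0 := h.1
        subst this
        have hd : d ≠ 0 := h.2
        exact ⟨fun f => (f ⟨0, Nat.pos_of_ne_zero hd⟩).elim0⟩
      exact hS (funext fun idx => (this.false idx).elim)
    · exact h
  have h1 : Nat.card (Tensor q n d) =
      Nat.card (Tensor q n d ⧸ (tmap S).ker) * Nat.card (tmap S).ker :=
    AddSubgroup.card_eq_card_quotient_mul_card_addSubgroup _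
  have h2 : Nat.card (Tensor q n d ⧸ (tmap S).ker) = q := by
    rw [Nat.card_congr (QuotientAddGroup.quotientKerEquivOfSurjective _ (tmap_surj S hS)).toEquiv]
    simp [Nat.card_eq_fintype_card]
  have h3 : Nat.card (Tensor q n d) = q ^ (n ^ d) := by
    simp [Nat.card_eq_fintype_card, ZMod.card]
  have h4 : Nat.card {N : Tensor q n d // tinner N S = 0} = Nat.card (tmap S).ker := by
    apply Nat.card_congr
    exact Equiv.subtypeEquivRight (fun N => by
      simp [AddMonoidHom.mem_ker, tmap]
      rfl)
  rw [h2, h3] at h1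
  have h5 : q ^ (n ^ d) = q * q ^ (n ^ d - 1) := by
    rw [← pow_succ']
    congr 1
    omega
  rw [h5] at h1
  have := Nat.eq_of_mul_eq_mul_left hq.pos h1
  rw [h4, ← this]

lemma card_multi {q n d : ℕ} [Fact q.Prime] (m : ℕ) (S : Tensor q n d) (hS : S ≠ 0) :
    Nat.card {M : Fin m → Tensor q n d // ∀ k, tinner (M k) S = 0} = (q ^ (n ^ d - 1)) ^ m := by
  rw [Nat.card_congr (Equiv.subtypePiEquivPi (p := fun (_ : Fin m) (N : Tensor q n d) =>
    tinner N S = 0)), Nat.card_pi]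
  rw [Finset.prod_const, Finset.card_univ, Fintype.card_fin, card_ker S hS]

/-- For a fixed tensor `T*` of rank at most `r` and i.i.d. uniform sensing tensors
`M⁽¹⁾,…,M⁽ᵐ⁾` (modelled by the uniform distribution on `Fin m → Tensor q n d`), the
probability of the error event `E` — that some `T ≠ T*` of rank at most `r` has the same
measurement vector `y_T = y_{T*}` — is at most `q^(−(m − n·r·d))`. -/
theorem prob_error_le (q n d r m : ℕ) [Fact q.Prime]
    (hn : 1 ≤ n) (hd : 2 ≤ d) (hm : 1 ≤ m)
    (Tstar : Tensor q n d) (hTstar : rankLE q n d r Tstar) :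
    (Nat.card {M : Fin m → Tensor q n d //
        ∃ T : Tensor q n d, T ≠ Tstar ∧ rankLE q n d r T ∧
          ∀ k, tinner (M k) T = tinner (M k) Tstar} : ℝ) /
        Fintype.card (Fin m → Tensor q n d)
      ≤ (q : ℝ) ^ (-((m : ℤ) - (n : ℤ) * r * d)) := by
  classical
  have hq : q.Prime := Fact.out
  set P : (Fin m → Tensor q n d) → Prop := fun M =>
    ∃ T : Tensor q n d, T ≠ Tstar ∧ rankLE q n d r T ∧
      ∀ k, tinner (M k) T = tinner (M k) Tstar with hP
  -- the tensor associated to a rank decomposition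
  set tens : (Fin r → Fin d → Fin n → ZMod q) → Tensor q n d :=
    fun u idx => ∑ i : Fin r, ∏ j : Fin d, u i j (idx j) with htens
  set Q : (Fin r → Fin d → Fin n → ZMod q) → (Fin m → Tensor q n d) → Prop :=
    fun u M => tens u ≠ Tstar ∧ ∀ k, tinner (M k) (tens u - Tstar) = 0 with hQ
  -- counting
  have hcard : Nat.card {M // P M} = (Finset.univ.filter P).card := by
    rw [Nat.card_eq_fintype_card, Fintype.card_subtype]
  have hsub : Finset.univ.filter P ⊆
      Finset.univ.biUnion (fun u => Finset.univ.filter (Q u)) := by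
    intro M hM
    rw [Finset.mem_filter] at hM
    obtain ⟨-, T, hne, ⟨u, hu⟩, heq⟩ := hM
    have hTu : T = tens u := funext hu
    refine Finset.mem_biUnion.mpr ⟨u, Finset.mem_univ _, Finset.mem_filter.mpr
      ⟨Finset.mem_univ _, hTu ▸ hne, fun k => ?_⟩⟩
    rw [tinner_sub, ← hTu, heq k, sub_self]
  have hbound : ∀ u, (Finset.univ.filter (Q u)).card ≤ (q ^ (n ^ d - 1)) ^ m := by
    intro u
    by_cases h : tens u = Tstar
    · have : Finset.univ.filter (Q u) = ∅ := by
        apply Finset.filter_false_of_mem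
        intro M _ hQM
        exact hQM.1 h
      simp [this]
    · have hsub2 : Finset.univ.filter (Q u) ⊆
          Finset.univ.filter (fun M : Fin m → Tensor q n d =>
            ∀ k, tinner (M k) (tens u - Tstar) = 0) := by
        intro M hM
        rw [Finset.mem_filter] at hM ⊢
        exact ⟨hM.1, hM.2.2⟩
      have hS : tens u - Tstar ≠ 0 := sub_ne_zero.mpr h
      calc (Finset.univ.filter (Q u)).card
          ≤ (Finset.univ.filter (fun M : Fin m → Tensor q n d =>
            ∀ k, tinner (M k) (tens u - Tstar) = 0)).card := Finset.card_le_card hsub2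
        _ = (q ^ (n ^ d - 1)) ^ m := by
            rw [← Fintype.card_subtype, ← Nat.card_eq_fintype_card]
            exact card_multi m _ hS
  have hU : Fintype.card (Fin r → Fin d → Fin n → ZMod q) = q ^ (n * r * d) := by
    simp [ZMod.card]
    ring
  have hmain : Nat.card {M // P M} ≤ q ^ (n * r * d) * (q ^ (n ^ d - 1)) ^ m := by
    rw [hcard]
    calc (Finset.univ.filter P).card
        ≤ (Finset.univ.biUnion (fun u => Finset.univ.filter (Q u))).card :=
          Finset.card_le_card hsub
      _ ≤ ∑ u : Fin r → Fin d → Fin n → ZMod q, (Finset.univ.filter (Q u)).card :=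
          Finset.card_biUnion_le
      _ ≤ ∑ _u : Fin r → Fin d → Fin n → ZMod q, (q ^ (n ^ d - 1)) ^ m :=
          Finset.sum_le_sum (fun u _ => hbound u)
      _ = q ^ (n * r * d) * (q ^ (n ^ d - 1)) ^ m := by
          rw [Finset.sum_const, Finset.card_univ, hU, smul_eq_mul]
  -- real arithmetic
  have hq0 : (0:ℝ) < (q:ℝ) := by exact_mod_cast hq.pos
  have hDen : (Fintype.card (Fin m → Tensor q n d) : ℝ) =
      (q:ℝ) ^ m * ((q:ℝ) ^ (n ^ d - 1)) ^ m := by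
    have hnd : 1 ≤ n ^ d := Nat.one_le_pow _ _ hn
    have : Fintype.card (Fin m → Tensor q n d) = q ^ (n ^ d * m) := by
      simp [ZMod.card]
      ring
    rw [this]
    push_cast
    rw [← pow_mul, ← pow_add]
    congr 1
    obtain ⟨a, ha⟩ : ∃ a, n ^ d = a + 1 := ⟨n ^ d - 1, by omega⟩
    rw [ha]
    simp
    ring
  have hX : (0:ℝ) < ((q:ℝ) ^ (n ^ d - 1)) ^ m := by positivity
  have hDpos : (0:ℝ) < (Fintype.card (Fin m → Tensor q n d) : ℝ) := by
    rw [hDen]; positivity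
  have hle : (Nat.card {M // P M} : ℝ) / (Fintype.card (Fin m → Tensor q n d) : ℝ)
      ≤ ((q:ℝ) ^ (n * r * d) * ((q:ℝ) ^ (n ^ d - 1)) ^ m) /
        ((q:ℝ) ^ m * ((q:ℝ) ^ (n ^ d - 1)) ^ m) := by
    rw [← hDen]
    gcongr
    · exact_mod_cast hmain
  calc (Nat.card {M // P M} : ℝ) / (Fintype.card (Fin m → Tensor q n d) : ℝ)
      ≤ ((q:ℝ) ^ (n * r * d) * ((q:ℝ) ^ (n ^ d - 1)) ^ m) /
        ((q:ℝ) ^ m * ((q:ℝ) ^ (n ^ d - 1)) ^ m) := hle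
    _ = (q:ℝ) ^ (n * r * d) / (q:ℝ) ^ m := mul_div_mul_right _ _ hX.ne'
    _ = (q : ℝ) ^ (-((m : ℤ) - (n : ℤ) * r * d)) := by
        rw [← zpow_natCast (q:ℝ) (n * r * d), ← zpow_natCast (q:ℝ) m,
          ← zpow_sub₀ hq0.ne']
        congr 1
        push_cast
        ring
end

section
/- (Fano-type converse, noisy.) Let q be a prime, n, d, r, m ≥ 1 with |𝒯(n;d;r;q)| > 1, and ε ∈ [0,1]. Let T* be uniformly distributed on 𝒯(n;d;r;q), let M^{(1)},…,M^{(m)} be i.i.d. uniformly distributed (n;d)-tensors over 𝔽_q independent of T*, let y = y_{T*}, and let ỹ = y + z where z_1,…,z_m ∈ 𝔽_q are i.i.d., independent of (T*, M^{(1)},…,M^{(m)}), with Pr(z_k = 0) = 1 − ε and Pr(z_k = a) = ε/(q−1) for each a ≠ 0. Then for every decoding function f mapping (ỹ, M^{(1)},…,M^{(m)}) to an (n;d)-tensor, P_e = Pr( f(ỹ, M^{(1)},…,M^{(m)}) ≠ T* ) satisfies P_e ≥ ( log₂|𝒯(n;d;r;q)| − m·(log₂ q − h₂(ε) − ε·log₂(q−1))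 − 1 ) / log₂|𝒯(n;d;r;q)|. -/
open scoped Classical

/-- Probability weight of a noise symbol of the `q`-ary symmetric channel with error
probability `ε`. -/
noncomputable def noiseW (q : ℕ) [Fact q.Prime] (ε : ℝ) (z : ZMod q) : ℝ :=
  if z = 0 then 1 - ε else ε / ((q : ℝ) - 1)

/-- The binary entropy function `h₂(x) = −x·log₂ x − (1−x)·log₂(1−x)`
(with the convention `0·log₂ 0 = 0`, automatic since `Real.logb 2 0 = 0`). -/
noncomputable def binEnt (x : ℝ) : ℝ := -(x * Real.logb 2 x) - (1 - x) * Real.logb 2 (1 - x)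

open Real Finset

/-- Homogeneous "entropy ≤ log card" via Jensen. -/
lemma sum_negMulLog_le_card {ι : Type*} (t : Finset ι) (a : ι → ℝ) (ha : ∀ i ∈ t, 0 ≤ a i) :
    ∑ i ∈ t, negMulLog (a i) ≤
      (∑ i ∈ t, a i) * Real.log t.card + negMulLog (∑ i ∈ t, a i) := by
  rcases t.eq_empty_or_nonempty with rfl | hne
  · simp
  have hK : (0:ℝ) < t.card := by exact_mod_cast Finset.card_pos.mpr hne
  have hjen := concaveOn_negMulLog.le_map_sum (t := t) (w := fun _ => (t.card : ℝ)⁻¹)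
      (p := fun i => (t.card : ℝ) * a i)
      (fun i _ => by positivity)
      (by rw [Finset.sum_const, nsmul_eq_mul]; field_simp)
      (fun i hi => by exact Set.mem_Ici.mpr (mul_nonneg hK.le (ha i hi)))
  simp only [smul_eq_mul] at hjen
  have h1 : ∀ i ∈ t, (t.card : ℝ)⁻¹ * negMulLog ((t.card : ℝ) * a i)
      = negMulLog (a i) - a i * Real.log t.card := by
    intro i hi
    rw [negMulLog_mul]
    field_simp [negMulLog]
    simp only [Real.negMulLog]
    ring
  have h2 : ∑ i ∈ t, (t.card : ℝ)⁻¹ * ((t.card : ℝ) * a i) = ∑ i ∈ t, a i := by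
    apply Finset.sum_congr rfl; intro i hi; field_simp
  rw [Finset.sum_congr rfl h1, Finset.sum_sub_distrib, ← Finset.sum_mul, h2] at hjen
  linarith

lemma negMulLog_add_le {a b : ℝ} (ha : 0 ≤ a) (hb : 0 ≤ b) :
    negMulLog a + negMulLog b ≤ negMulLog (a + b) + (a + b) * Real.log 2 := by
  have := sum_negMulLog_le_card (t := (Finset.univ : Finset (Fin 2)))
      (a := fun i => if i = 0 then a else b) (by intro i _; split <;> assumption)
  simp only [Fin.sum_univ_two] at this
  norm_num at this
  linarith

/-- Per-observation Fano bound (homogeneous in the total mass), with an abstract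
error indicator `E`. -/
lemma fano_y {A : Type*} [Fintype A] (p : A → ℝ) (hp : ∀ a, 0 ≤ p a) (E : A → ℝ)
    (hE : (∀ a, E a = 1) ∨ ∃ t, 0 ≤ E t ∧ ∀ a, a ≠ t → E a = 1) :
    ∑ a, negMulLog (p a) ≤ negMulLog (∑ a, p a) + (∑ a, p a) * Real.log 2
      + (∑ a, E a * p a) * Real.log (Fintype.card A) := by
  have hs : 0 ≤ ∑ a, p a := Finset.sum_nonneg fun a _ => hp a
  have hlogN : (0:ℝ) ≤ Real.log (Fintype.card A) := by
    rcases Nat.eq_zero_or_pos (Fintype.card A) with h | h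
    · simp [h]
    · exact Real.log_natCast_nonneg _
  rcases hE with hall | ⟨t, hEt, hrest1⟩
  · have h := sum_negMulLog_le_card Finset.univ p (fun a _ => hp a)
    have he : (∑ a, E a * p a) = ∑ a, p a :=
      Finset.sum_congr rfl fun a _ => by rw [hall a, one_mul]
    rw [he]
    calc ∑ a, negMulLog (p a) ≤ (∑ a, p a) * Real.log (Fintype.card A) + negMulLog (∑ a, p a) := by
          simpa using h
      _ ≤ _ := by nlinarith [mul_nonneg hs (Real.log_nonneg (by norm_num : (1:ℝ) ≤ 2))]
  · set e : ℝ := ∑ a ∈ Finset.univ.erase t, p a with he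
    have hsplit : ∑ a, p a = p t + e := (Finset.add_sum_erase _ p (Finset.mem_univ t)).symm
    have hee : (0:ℝ) ≤ e := Finset.sum_nonneg fun a _ => hp a
    have hrest : ∑ a ∈ Finset.univ.erase t, negMulLog (p a) ≤
        e * Real.log (Fintype.card A) + negMulLog e := by
      refine le_trans (sum_negMulLog_le_card _ p (fun a _ => hp a)) ?_
      have hcard : ((Finset.univ.erase t).card : ℝ) ≤ (Fintype.card A : ℝ) := by
        exact_mod_cast Finset.card_le_card (Finset.erase_subset _ _) |>.trans_eq
          (Finset.card_univ)
      have : Real.log ((Finset.univ.erase t).card) ≤ Real.log (Fintype.card A) := by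
        rcases Nat.eq_zero_or_pos ((Finset.univ.erase t).card) with h | h
        · simp [h, hlogN]
        · exact Real.log_le_log (by exact_mod_cast h) hcard
      nlinarith [mul_le_mul_of_nonneg_left this hee]
    have hbin := negMulLog_add_le (hp t) hee
    have hErr : e ≤ ∑ a, E a * p a := by
      rw [← Finset.add_sum_erase _ _ (Finset.mem_univ t), he]
      have h1 : ∑ a ∈ Finset.univ.erase t, p a = ∑ a ∈ Finset.univ.erase t, E a * p a := by
        refine Finset.sum_congr rfl fun a ha => ?_
        rw [hrest1 a (Finset.mem_erase.mp ha).1, one_mul]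
      rw [h1]
      nlinarith [mul_nonneg hEt (hp t)]
    calc ∑ a, negMulLog (p a)
        = negMulLog (p t) + ∑ a ∈ Finset.univ.erase t, negMulLog (p a) :=
          (Finset.add_sum_erase _ _ (Finset.mem_univ t)).symm
      _ ≤ negMulLog (p t) + (e * Real.log (Fintype.card A) + negMulLog e) := by linarith
      _ ≤ negMulLog (∑ a, p a) + (∑ a, p a) * Real.log 2 + e * Real.log (Fintype.card A) := by
          rw [hsplit]; linarith
      _ ≤ _ := by nlinarith [mul_le_mul_of_nonneg_right hErr hlogN]

lemma sum_pi_prod {α : Type*} [Fintype α] (w : α → ℝ) :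
    ∀ m : ℕ, ∑ z : Fin m → α, ∏ k, w (z k) = (∑ a, w a) ^ m := by
  intro m
  induction m with
  | zero => simp
  | succ m ih =>
      rw [← (Fin.consEquiv (fun _ : Fin (m+1) => α)).sum_comp
        (fun z : Fin (m+1) → α => ∏ k, w (z k))]
      rw [Fintype.sum_prod_type]
      simp only [Fin.consEquiv_apply, Fin.prod_univ_succ, Fin.cons_zero, Fin.cons_succ]
      rw [← Finset.sum_mul_sum]
      rw [ih, pow_succ]
      ring

lemma sum_pi_negMulLog {α : Type*} [Fintype α] (w : α → ℝ) (hw : ∑ a, w a = 1) :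
    ∀ m : ℕ, ∑ z : Fin m → α, negMulLog (∏ k, w (z k)) = m * ∑ a, negMulLog (w a) := by
  intro m
  induction m with
  | zero => simp
  | succ m ih =>
      rw [← (Fin.consEquiv (fun _ : Fin (m+1) => α)).sum_comp
        (fun z : Fin (m+1) → α => negMulLog (∏ k, w (z k)))]
      rw [Fintype.sum_prod_type]
      simp only [Fin.consEquiv_apply, Fin.prod_univ_succ, Fin.cons_zero, Fin.cons_succ,
        negMulLog_mul]
      rw [Finset.sum_comm]
      have h1 : ∀ z : Fin m → α, ∑ a : α,
          ((∏ k, w (z k)) * negMulLog (w a) + w a * negMulLog (∏ k, w (z k)))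
          = (∏ k, w (z k)) * (∑ a, negMulLog (w a)) + negMulLog (∏ k, w (z k)) := by
        intro z
        rw [Finset.sum_add_distrib, ← Finset.mul_sum, ← Finset.sum_mul, hw, one_mul]
      rw [Finset.sum_congr rfl (fun z _ => h1 z), Finset.sum_add_distrib, ← Finset.sum_mul,
        sum_pi_prod, hw, one_pow, one_mul, ih]
      push_cast
      ring

section noise
variable (q : ℕ) [Fact q.Prime] {ε : ℝ}

lemma q_two_le : (2:ℝ) ≤ (q:ℝ) := by exact_mod_cast (Fact.out : q.Prime).two_le

lemma noiseW_nonneg (hε0 : 0 ≤ ε) (hε1 : ε ≤ 1) (z : ZMod q) : 0 ≤ noiseW q ε z := by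
  unfold noiseW
  have := q_two_le q
  split
  · linarith
  · exact div_nonneg hε0 (by linarith)

lemma sum_const_ZMod (A B : ℝ) :
    ∑ a : ZMod q, (if a = 0 then A else B) = A + ((q:ℝ) - 1) * B := by
  haveI : NeZero q := ⟨(Fact.out : q.Prime).ne_zero⟩
  rw [← Finset.add_sum_erase _ _ (Finset.mem_univ (0 : ZMod q)), if_pos rfl]
  congr 1
  rw [Finset.sum_congr rfl (fun a ha => if_neg (Finset.mem_erase.mp ha).1),
    Finset.sum_const, Finset.card_erase_of_mem (Finset.mem_univ _), Finset.card_univ,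
    ZMod.card, nsmul_eq_mul]
  have hq1 : 1 ≤ q := (Fact.out : q.Prime).one_le
  push_cast [Nat.cast_sub hq1]
  ring

lemma sum_noiseW : ∑ a : ZMod q, noiseW q ε a = 1 := by
  unfold noiseW
  rw [sum_const_ZMod]
  have h2 : (2:ℝ) ≤ (q:ℝ) := q_two_le q
  have h3 : ((q:ℝ)-1) * (ε/((q:ℝ)-1)) = ε := by
    rw [mul_div_cancel₀ _ (by linarith : (q:ℝ)-1 ≠ 0)]
  linarith

lemma sum_negMulLog_noiseW (hε0 : 0 ≤ ε) :
    ∑ a : ZMod q, negMulLog (noiseW q ε a)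
      = (binEnt ε + ε * Real.logb 2 ((q:ℝ) - 1)) * Real.log 2 := by
  have h2 : (2:ℝ) ≤ (q:ℝ) := q_two_le q
  have hc : (0:ℝ) < (q:ℝ) - 1 := by linarith
  have hlog2 : Real.log 2 ≠ 0 := (Real.log_pos (by norm_num)).ne'
  unfold noiseW
  simp only [apply_ite negMulLog]
  rw [sum_const_ZMod]
  rcases eq_or_lt_of_le hε0 with h0 | hpos
  · rw [← h0]
    simp [binEnt, negMulLog]
  · rw [binEnt]
    have hd : negMulLog (ε / ((q:ℝ)-1)) = -(ε / ((q:ℝ)-1)) * (Real.log ε - Real.log ((q:ℝ)-1)) := by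
      rw [negMulLog, Real.log_div hpos.ne' hc.ne']
    rw [hd, negMulLog]
    simp only [Real.logb, div_mul_eq_mul_div]
    field_simp
    ring
end noise


/-- The combined per-`M` Fano bound: `log N + H(W) ≤ log |Y| + log 2 + P_e(M) · log N`. -/
lemma perM {A Y : Type*} [Fintype A] [Fintype Y] [AddCommGroup Y]
    (W : Y → ℝ) (hW0 : ∀ z, 0 ≤ W z) (hW1 : ∑ z, W z = 1)
    (v : A → Y) (E : A → Y → ℝ)
    (hE : ∀ y : Y, (∀ a, E a y = 1) ∨ ∃ t, 0 ≤ E t y ∧ ∀ a, a ≠ t → E a y = 1)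
    (hA : 0 < Fintype.card A) :
    Real.log (Fintype.card A) + ∑ z, negMulLog (W z)
      ≤ Real.log (Fintype.card Y) + Real.log 2 +
        (∑ a, ∑ z, ((Fintype.card A : ℝ))⁻¹ * W z * E a (v a + z))
          * Real.log (Fintype.card A) := by
  set N : ℝ := (Fintype.card A : ℝ) with hN
  have hN0 : (0:ℝ) < N := by rw [hN]; exact_mod_cast hA
  set P : A → Y → ℝ := fun a y => N⁻¹ * W (y - v a) with hP
  have hPnn : ∀ a y, 0 ≤ P a y := fun a y => mul_nonneg (by positivity) (hW0 _)
  have hchg : ∀ (a : A) (F : Y → ℝ), ∑ y, F (y - v a) = ∑ z, F z := by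
    intro a F
    exact Fintype.sum_equiv (Equiv.subRight (v a)) _ _ (fun y => rfl)
  have hjoint : ∑ a, ∑ y, negMulLog (P a y) = Real.log N + ∑ z, negMulLog (W z) := by
    have hper : ∀ a : A, ∑ y, negMulLog (P a y)
        = negMulLog N⁻¹ + N⁻¹ * ∑ z, negMulLog (W z) := by
      intro a
      have : ∀ y : Y, negMulLog (P a y)
          = (fun u => W u * negMulLog N⁻¹ + N⁻¹ * negMulLog (W u)) (y - v a) := by
        intro y; simp only [hP, negMulLog_mul]
      rw [Finset.sum_congr rfl (fun y _ => this y),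
        hchg a (fun u => W u * negMulLog N⁻¹ + N⁻¹ * negMulLog (W u))]
      rw [Finset.sum_add_distrib, ← Finset.sum_mul, hW1, one_mul, ← Finset.mul_sum]
    rw [Finset.sum_congr rfl (fun a _ => hper a), Finset.sum_const, Finset.card_univ,
      nsmul_eq_mul, ← hN]
    have : negMulLog N⁻¹ = N⁻¹ * Real.log N := by
      rw [negMulLog, Real.log_inv]; ring
    rw [this, mul_add]
    rw [show N * (N⁻¹ * Real.log N) = Real.log N by field_simp,
      show N * (N⁻¹ * ∑ z, negMulLog (W z)) = ∑ z, negMulLog (W z) by field_simp]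
  have hmass : ∀ a : A, ∑ y, P a y = N⁻¹ := by
    intro a
    have h1 : ∑ y, P a y = N⁻¹ * ∑ y, W (y - v a) := by
      rw [Finset.mul_sum]
    rw [h1, hchg a W, hW1, mul_one]
  have hs1 : ∑ y, ∑ a, P a y = 1 := by
    rw [Finset.sum_comm, Finset.sum_congr rfl (fun a _ => hmass a), Finset.sum_const,
      Finset.card_univ, nsmul_eq_mul, ← hN]
    field_simp
  have hfano : ∀ y : Y, ∑ a, negMulLog (P a y) ≤ negMulLog (∑ a, P a y)
      + (∑ a, P a y) * Real.log 2
      + (∑ a, E a y * P a y) * Real.log N := by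
    intro y
    exact fano_y (fun a => P a y) (fun a => hPnn a y) (fun a => E a y) (hE y)
  have hsum := Finset.sum_le_sum (fun y (_ : y ∈ Finset.univ) => hfano y)
  rw [Finset.sum_add_distrib, Finset.sum_add_distrib, ← Finset.sum_mul, hs1, one_mul,
    ← Finset.sum_mul] at hsum
  have hmarg : ∑ y, negMulLog (∑ a, P a y) ≤ Real.log (Fintype.card Y) := by
    have := sum_negMulLog_le_card (Finset.univ : Finset Y) (fun y => ∑ a, P a y)
      (fun y _ => Finset.sum_nonneg fun a _ => hPnn a y)
    rw [hs1] at this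
    simpa using this
  have herr : ∑ y, ∑ a, E a y * P a y
      = ∑ a, ∑ z, N⁻¹ * W z * E a (v a + z) := by
    rw [Finset.sum_comm]
    refine Finset.sum_congr rfl fun a _ => ?_
    have : ∀ y : Y, E a y * P a y
        = (fun u => N⁻¹ * W u * E a (v a + u)) (y - v a) := by
      intro y
      simp only [hP, add_sub_cancel]
      ring
    rw [Finset.sum_congr rfl (fun y _ => this y),
      hchg a (fun u => N⁻¹ * W u * E a (v a + u))]
  have hjoint' : ∑ y, ∑ a, negMulLog (P a y) = Real.log N + ∑ z, negMulLog (W z) := by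
    rw [Finset.sum_comm]; exact hjoint
  rw [hjoint', herr] at hsum
  linarith

set_option maxHeartbeats 1000000 in
/-- **Fano-type converse (noisy).** `T*` is uniform on `𝒯(n;d;r;q)`, the sensing tensors
are i.i.d. uniform and independent of `T*`, and `ỹ = y_{T*} + z` where the noise symbols
`z_k` are i.i.d. (independent of everything else) with `Pr(z_k = 0) = 1 − ε` and
`Pr(z_k = a) = ε/(q−1)` for `a ≠ 0`.  For every deterministic decoder `f`,
`P_e ≥ (log₂|𝒯| − m·(log₂ q − h₂(ε) − ε·log₂(q−1)) − 1) / log₂|𝒯|`. -/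
theorem fano_converse_noisy (q n d r m : ℕ) [Fact q.Prime]
    (hn : 1 ≤ n) (hd : 1 ≤ d) (hr : 1 ≤ r) (hm : 1 ≤ m)
    (hcard : 1 < Nat.card {T : Tensor q n d // rankLE q n d r T})
    (ε : ℝ) (hε0 : 0 ≤ ε) (hε1 : ε ≤ 1)
    (f : (Fin m → ZMod q) → (Fin m → Tensor q n d) → Tensor q n d) :
    (∑ Tstar : {T : Tensor q n d // rankLE q n d r T}, ∑ M : Fin m → Tensor q n d,
        ∑ z : Fin m → ZMod q,
          (∏ k, noiseW q ε (z k)) *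
            (if f (fun k => tinner (M k) Tstar.1 + z k) M ≠ Tstar.1 then 1 else 0)) /
        ((Nat.card {T : Tensor q n d // rankLE q n d r T} : ℝ) *
          (Fintype.card (Tensor q n d) : ℝ) ^ m)
      ≥ (Real.logb 2 (Nat.card {T : Tensor q n d // rankLE q n d r T})
          - m * (Real.logb 2 q - binEnt ε - ε * Real.logb 2 ((q : ℝ) - 1)) - 1) /
        Real.logb 2 (Nat.card {T : Tensor q n d // rankLE q n d r T}) := by
  set A := {T : Tensor q n d // rankLE q n d r T} with hAdef
  have hNat : (Nat.card A : ℝ) = (Fintype.card A : ℝ) := by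
    rw [Nat.card_eq_fintype_card]
  set N : ℝ := (Fintype.card A : ℝ) with hNdef
  have hN2 : (2:ℝ) ≤ N := by
    rw [hNdef]
    have : 2 ≤ Fintype.card A := by rwa [Nat.card_eq_fintype_card] at hcard
    exact_mod_cast this
  have hN0 : (0:ℝ) < N := by linarith
  have hΛ : (0:ℝ) < Real.log N := Real.log_pos (by linarith)
  set Λ : ℝ := Real.log N with hΛdef
  -- noise distribution
  set W : (Fin m → ZMod q) → ℝ := fun z => ∏ k, noiseW q ε (z k) with hWdef
  have hW0 : ∀ z, 0 ≤ W z := fun z => Finset.prod_nonneg fun k _ => noiseW_nonneg q hε0 hε1 _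
  have hW1 : ∑ z, W z = 1 := by
    rw [hWdef]
    rw [sum_pi_prod (noiseW q ε) m, sum_noiseW q, one_pow]
  set hq : ℝ := ∑ a : ZMod q, negMulLog (noiseW q ε a) with hqdef
  have hHW : ∑ z, negMulLog (W z) = m * hq := by
    rw [hWdef, hqdef]
    exact sum_pi_negMulLog (noiseW q ε) (sum_noiseW q) m
  have hqval : hq = (binEnt ε + ε * Real.logb 2 ((q:ℝ) - 1)) * Real.log 2 :=
    sum_negMulLog_noiseW q hε0
  -- cardinality of the observation space
  have hcardY : (Fintype.card (Fin m → ZMod q) : ℝ) = (q:ℝ) ^ m := by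
    haveI : NeZero q := ⟨(Fact.out : q.Prime).ne_zero⟩
    rw [Fintype.card_fun, ZMod.card, Fintype.card_fin]
    push_cast
    ring
  have hlogY : Real.log (Fintype.card (Fin m → ZMod q)) = m * Real.log q := by
    rw [hcardY, Real.log_pow]
  -- per-M bound
  set R : ℝ := Λ + m * hq - m * Real.log q - Real.log 2 with hRdef
  have hperM : ∀ M : Fin m → Tensor q n d,
      R / Λ ≤ ∑ a : A, ∑ z : Fin m → ZMod q,
        N⁻¹ * W z * (if f (fun k => tinner (M k) a.1 + z k) M ≠ a.1 then 1 else 0) := by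
    intro M
    have hE : ∀ y : Fin m → ZMod q,
        (∀ a : A, (if f y M ≠ a.1 then (1:ℝ) else 0) = 1) ∨
        ∃ t : A, (0:ℝ) ≤ (if f y M ≠ t.1 then (1:ℝ) else 0) ∧
          ∀ a : A, a ≠ t → (if f y M ≠ a.1 then (1:ℝ) else 0) = 1 := by
      intro y
      by_cases hex : ∃ t : A, f y M = t.1
      · obtain ⟨t, ht⟩ := hex
        refine Or.inr ⟨t, ?_, ?_⟩
        · split <;> norm_num
        · intro a ha
          have hne : f y M ≠ a.1 := by
            intro h
            exact ha (Subtype.ext (by rw [← h, ← ht]))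
          split
          · rfl
          · next hcon => exact absurd hne hcon
      · refine Or.inl fun a => ?_
        have hne : f y M ≠ a.1 := fun h => hex ⟨a, h⟩
        split
        · rfl
        · next hcon => exact absurd hne hcon
    have hbound := perM (A := A) (Y := Fin m → ZMod q) W hW0 hW1
      (fun t k => tinner (M k) t.1)
      (fun a y => if f y M ≠ a.1 then (1:ℝ) else 0) hE
      (by rw [← Nat.card_eq_fintype_card]; omega)
    rw [hHW, hlogY] at hbound
    have hbound' : Λ + (m:ℝ) * hq ≤ (m:ℝ) * Real.log q + Real.log 2 +
        (∑ a : A, ∑ z : Fin m → ZMod q,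
          N⁻¹ * W z * (if f (fun k => tinner (M k) a.1 + z k) M ≠ a.1 then 1 else 0)) * Λ :=
      hbound
    rw [div_le_iff₀ hΛ, hRdef]
    linarith
  -- average over M
  set Err : (Fin m → Tensor q n d) → ℝ := fun M => ∑ a : A, ∑ z : Fin m → ZMod q,
      N⁻¹ * W z * (if f (fun k => tinner (M k) a.1 + z k) M ≠ a.1 then 1 else 0) with hErrdef
  set Qm : ℝ := (Fintype.card (Tensor q n d) : ℝ) ^ m with hQmdef
  have hQm0 : (0:ℝ) < Qm := by
    rw [hQmdef]
    have : 0 < Fintype.card (Tensor q n d) := Fintype.card_pos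
    positivity
  have hQmcard : (Fintype.card (Fin m → Tensor q n d) : ℝ) = Qm := by
    rw [hQmdef, Fintype.card_fun, Fintype.card_fin]
    push_cast
    ring
  have hsumM : Qm * (R / Λ) ≤ ∑ M : Fin m → Tensor q n d, Err M := by
    calc Qm * (R/Λ) = ∑ _M : Fin m → Tensor q n d, R/Λ := by
          rw [Finset.sum_const, Finset.card_univ, nsmul_eq_mul, hQmcard]
      _ ≤ ∑ M, Err M := Finset.sum_le_sum fun M _ => hperM M
  -- rewrite the goal's big sum
  have hS : (∑ Tstar : A, ∑ M : Fin m → Tensor q n d, ∑ z : Fin m → ZMod q,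
        W z * (if f (fun k => tinner (M k) Tstar.1 + z k) M ≠ Tstar.1 then 1 else 0))
      = N * ∑ M : Fin m → Tensor q n d, Err M := by
    rw [Finset.mul_sum]
    rw [Finset.sum_comm]
    refine Finset.sum_congr rfl fun M _ => ?_
    rw [hErrdef]
    rw [Finset.mul_sum]
    refine Finset.sum_congr rfl fun a _ => ?_
    rw [Finset.mul_sum]
    refine Finset.sum_congr rfl fun z _ => ?_
    rw [← mul_assoc, ← mul_assoc, mul_inv_cancel₀ hN0.ne', one_mul]
  -- final arithmetic
  have hmain : (∑ Tstar : A, ∑ M : Fin m → Tensor q n d, ∑ z : Fin m → ZMod q,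
        W z * (if f (fun k => tinner (M k) Tstar.1 + z k) M ≠ Tstar.1 then 1 else 0))
        / (N * Qm) ≥ R / Λ := by
    rw [hS, ge_iff_le, mul_div_mul_left _ _ hN0.ne', le_div_iff₀ hQm0]
    calc R / Λ * Qm = Qm * (R/Λ) := by ring
      _ ≤ ∑ M, Err M := hsumM
  -- identify R/Λ with the stated bound
  have hl2 : (0:ℝ) < Real.log 2 := Real.log_pos (by norm_num)
  have hRHS : (Real.logb 2 N - m * (Real.logb 2 q - binEnt ε - ε * Real.logb 2 ((q:ℝ) - 1)) - 1)
      / Real.logb 2 N = R / Λ := by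
    rw [hRdef, hΛdef, hqval]
    simp only [Real.logb]
    rw [div_eq_div_iff (div_ne_zero hΛ.ne' hl2.ne') hΛ.ne']
    field_simp
    try ring
    try tauto
  rw [hNat]
  rw [hRHS]
  exact hmain
end

section
/- Let q be a prime, n, d, m ≥ 1, ε ∈ [0,1], and let T ≠ T* be two fixed (n;d)-tensors over 𝔽_q. In the noisy model where M^{(1)},…,M^{(m)} are i.i.d. uniform (n;d)-tensors and ỹ = y_{T*} + z with q-ary symmetric noise z of error probability ε, for every integer τ with 0 ≤ τ ≤ m(q−1)/q one has Pr( d_H(y_T, ỹ) ≤ τ ) ≤ exp( −2·( m(q−1)/q − τ )² / m ), where d_H is Hamming distance on 𝔽_q^m and exp is the natural exponential. -/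
open scoped Classical

/-- Hoeffding's lemma, Bernoulli case. -/
lemma bern_mgf (p s : ℝ) (hp0 : 0 ≤ p) (hp1 : p ≤ 1) (hs : 0 ≤ s) :
    p * Real.exp (-s) + (1 - p) ≤ Real.exp (-(s * p) + s ^ 2 / 8) := by
  set c : ℝ := 1 - p with hc
  have hc0 : 0 ≤ c := by linarith
  -- positivity of v t := c + p * exp t
  have hv : ∀ t : ℝ, 0 < c + p * Real.exp t := by
    intro t
    rcases eq_or_lt_of_le hp0 with h | h
    · have hp : p = 0 := h.symm
      rw [hp, hc, hp]; norm_num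
    · have := Real.exp_pos t
      nlinarith
  -- the function F t = p e^t / (c + p e^t)
  set F : ℝ → ℝ := fun t => p * Real.exp t / (c + p * Real.exp t) with hF
  have hvd : ∀ t : ℝ, HasDerivAt (fun t => c + p * Real.exp t) (p * Real.exp t) t := by
    intro t
    simpa using ((Real.hasDerivAt_exp t).const_mul p).const_add c
  have hFd : ∀ t : ℝ, HasDerivAt F (c * p * Real.exp t / (c + p * Real.exp t) ^ 2) t := by
    intro t
    have h1 : HasDerivAt (fun t => p * Real.exp t) (p * Real.exp t) t :=
      (Real.hasDerivAt_exp t).const_mul p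
    have := h1.div (hvd t) (ne_of_gt (hv t))
    exact this.congr_deriv (by ring)
  -- G t := p + t/4 - F t is monotone
  set G : ℝ → ℝ := fun t => p + t / 4 - F t with hG
  have hGd : ∀ t : ℝ, HasDerivAt G (1 / 4 - c * p * Real.exp t / (c + p * Real.exp t) ^ 2) t := by
    intro t
    have h1 : HasDerivAt (fun t : ℝ => p + t / 4) (1 / 4) t := by
      simpa using ((hasDerivAt_id t).div_const 4).const_add p
    exact h1.sub (hFd t)
  have hGmono : Monotone G := by
    apply monotone_of_deriv_nonneg
    · intro t; exact (hGd t).differentiableAt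
    · intro t
      rw [(hGd t).deriv]
      have h2 : 0 < (c + p * Real.exp t) ^ 2 := pow_pos (hv t) 2
      have h3 : c * p * Real.exp t / (c + p * Real.exp t) ^ 2 ≤ 1 / 4 := by
        rw [div_le_div_iff₀ h2 (by norm_num)]
        nlinarith [sq_nonneg (c - p * Real.exp t), Real.exp_pos t]
      linarith
  have hG0 : G 0 = 0 := by
    simp only [hG, hF, Real.exp_zero, mul_one]
    have : c + p = 1 := by rw [hc]; ring
    rw [this]
    simp
  -- g t := p*t + t^2/8 - log (c + p e^t) is antitone on Iic 0
  set g : ℝ → ℝ := fun t => p * t + t ^ 2 / 8 - Real.log (c + p * Real.exp t) with hg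
  have hgd : ∀ t : ℝ, HasDerivAt g (G t) t := by
    intro t
    have h1 : HasDerivAt (fun t : ℝ => p * t + t ^ 2 / 8) (p + t / 4) t := by
      have := ((hasDerivAt_pow 2 t).div_const 8).const_add 0
      have h2 : HasDerivAt (fun t : ℝ => p * t) p t := by
        simpa using (hasDerivAt_id t).const_mul p
      have h3 : HasDerivAt (fun t : ℝ => t ^ 2 / 8) (t / 4) t := by
        have := (hasDerivAt_pow 2 t).div_const 8
        exact this.congr_deriv (by push_cast; ring)
      exact h2.add h3
    have h4 : HasDerivAt (fun t => Real.log (c + p * Real.exp t)) (F t) t := by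
      have := (hvd t).log (ne_of_gt (hv t))
      simpa [hF] using this
    exact h1.sub h4
  have hganti : AntitoneOn g (Set.Iic 0) := by
    apply antitoneOn_of_deriv_nonpos (convex_Iic 0)
    · exact (Differentiable.continuous fun t => (hgd t).differentiableAt).continuousOn
    · intro t _; exact (hgd t).differentiableAt.differentiableWithinAt
    · intro t ht
      rw [(hgd t).deriv]
      rw [interior_Iic] at ht
      have := hGmono (le_of_lt ht)
      rw [hG0] at this
      exact this
  have hkey : g 0 ≤ g (-s) := hganti (by simpa using hs) Set.self_mem_Iic (by linarith)
  have hg0 : g 0 = 0 := by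
    simp only [hg, Real.exp_zero, mul_one]
    have : c + p = 1 := by rw [hc]; ring
    rw [this]
    simp
  rw [hg0] at hkey
  simp only [hg] at hkey
  have hlog : Real.log (c + p * Real.exp (-s)) ≤ -(s * p) + s ^ 2 / 8 := by nlinarith
  have := (Real.log_le_iff_le_exp (hv (-s))).mp hlog
  calc p * Real.exp (-s) + (1 - p) = c + p * Real.exp (-s) := by rw [hc]; ring
    _ ≤ _ := this


open Finset in
lemma sum_prod_univ {ι κ : Type*} [Fintype ι] [Fintype κ] [DecidableEq ι] (g : ι → κ → ℝ) :
    ∑ f : ι → κ, ∏ i, g i (f i) = ∏ i, ∑ j, g i j := by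
  rw [← Fintype.piFinset_univ]
  exact Finset.sum_prod_piFinset Finset.univ g

open Finset in
/-- Sum of a composed function over fibers with constant fiber cardinality. -/
lemma sum_comp_const_fiber {α β : Type*} [Fintype α] [Fintype β] [DecidableEq β]
    (g : α → β) (f : β → ℝ) (c : ℕ) (hc : ∀ b, Fintype.card {a // g a = b} = c) :
    ∑ a, f (g a) = (c : ℝ) * ∑ b, f b := by
  rw [← Fintype.sum_fiberwise' g f, Finset.mul_sum]
  refine Finset.sum_congr rfl fun b _ => ?_
  rw [Finset.sum_const, Finset.card_univ, hc b, nsmul_eq_mul]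

set_option maxHeartbeats 2000000 in
/-- **Hoeffding bound for a wrong candidate tensor.** For fixed tensors `T ≠ T*`, i.i.d.
uniform sensing tensors and `q`-ary symmetric noise `z` (with `ỹ = y_{T*} + z`), for every
integer `τ` with `0 ≤ τ ≤ m(q−1)/q`,
`Pr(d_H(y_T, ỹ) ≤ τ) ≤ exp(−2(m(q−1)/q − τ)²/m)`. -/
theorem prob_hamming_close_le (q n d m : ℕ) [Fact q.Prime]
    (hn : 1 ≤ n) (hd : 1 ≤ d) (hm : 1 ≤ m)
    (ε : ℝ) (hε0 : 0 ≤ ε) (hε1 : ε ≤ 1)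
    (T Tstar : Tensor q n d) (hT : T ≠ Tstar)
    (τ : ℕ) (hτ : (τ : ℝ) ≤ m * ((q : ℝ) - 1) / q) :
    (∑ M : Fin m → Tensor q n d, ∑ z : Fin m → ZMod q,
        (∏ k, noiseW q ε (z k)) *
          (if hammingDist (fun k => tinner (M k) T)
              (fun k => tinner (M k) Tstar + z k) ≤ τ then 1 else 0)) /
        (Fintype.card (Tensor q n d) : ℝ) ^ m
      ≤ Real.exp (-2 * (m * ((q : ℝ) - 1) / q - τ) ^ 2 / m) := by
  classical
  have hqp : q.Prime := Fact.out
  haveI : NeZero q := ⟨hqp.ne_zero⟩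
  have hq2 : 2 ≤ q := hqp.two_le
  have hqR : (1 : ℝ) < (q : ℝ) := by exact_mod_cast hqp.one_lt
  have hqR0 : (0 : ℝ) < (q : ℝ) := by linarith
  have hmR : (0 : ℝ) < (m : ℝ) := by exact_mod_cast hm
  -- parameters
  set p : ℝ := ((q : ℝ) - 1) / q with hpdef
  set μ : ℝ := (m : ℝ) * ((q : ℝ) - 1) / q with hμdef
  have hμp : μ = (m : ℝ) * p := by rw [hμdef, hpdef]; ring
  set s : ℝ := 4 * (μ - τ) / m with hsdef
  have hs0 : 0 ≤ s := by
    apply div_nonneg _ hmR.le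
    have : (τ : ℝ) ≤ μ := hτ
    linarith
  have hp0 : 0 ≤ p := by
    apply div_nonneg _ hqR0.le
    linarith
  have hp1 : p ≤ 1 := by
    rw [div_le_one hqR0]; linarith
  set E : ℝ := Real.exp (-2 * (μ - τ) ^ 2 / m) with hEdef
  -- the linear functional L
  set L : Tensor q n d → ZMod q := fun M => tinner M T - tinner M Tstar with hLdef
  have hLsub : ∀ x y : Tensor q n d, L (x - y) = L x - L y := by
    intro x y
    simp only [hLdef, tinner, Pi.sub_apply, sub_mul, Finset.sum_sub_distrib]
    ring
  have hLadd : ∀ x y : Tensor q n d, L (x + y) = L x + L y := by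
    intro x y
    simp only [hLdef, tinner, Pi.add_apply, add_mul, Finset.sum_add_distrib]
    ring
  -- a section of L
  obtain ⟨idx₀, hidx₀⟩ : ∃ idx, T idx ≠ Tstar idx := by
    by_contra h
    push_neg at h
    exact hT (funext h)
  have hD : T idx₀ - Tstar idx₀ ≠ 0 := sub_ne_zero.mpr hidx₀
  set Msel : ZMod q → Tensor q n d :=
    fun a idx => if idx = idx₀ then a * (T idx₀ - Tstar idx₀)⁻¹ else 0 with hMseldef
  have hMsel : ∀ a, L (Msel a) = a := by
    intro a
    have h1 : ∀ W : Tensor q n d, tinner (Msel a) W = a * (T idx₀ - Tstar idx₀)⁻¹ * W idx₀ := by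
      intro W
      simp only [tinner, hMseldef, ite_mul, zero_mul]
      rw [Finset.sum_ite_eq' Finset.univ idx₀ (fun idx => a * (T idx₀ - Tstar idx₀)⁻¹ * W idx)]
      simp
    simp only [hLdef, h1]
    rw [← mul_sub, mul_assoc, inv_mul_cancel₀ hD, mul_one]
  -- all fibers of L have the same cardinality c
  set c : ℕ := Fintype.card {x : Tensor q n d // L x = 0} with hcdef
  have hfib : ∀ a : ZMod q, Fintype.card {x : Tensor q n d // L x = a} = c := by
    intro a
    refine Fintype.card_congr ⟨fun x => ⟨x.1 - Msel a, ?_⟩, fun y => ⟨y.1 + Msel a, ?_⟩, ?_, ?_⟩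
    · rw [hLsub, x.2, hMsel, sub_self]
    · rw [hLadd, y.2, hMsel, zero_add]
    · intro x; ext; simp
    · intro y; ext; simp
  have hqc : q * c = Fintype.card (Tensor q n d) := by
    have h1 := Fintype.sum_fiberwise' L (fun _ : ZMod q => (1 : ℕ))
    simp only [Finset.sum_const, Finset.card_univ, smul_eq_mul, mul_one] at h1
    calc q * c = ∑ _a : ZMod q, c := by rw [Finset.sum_const, Finset.card_univ, ZMod.card, smul_eq_mul]
      _ = ∑ a : ZMod q, Fintype.card {x : Tensor q n d // L x = a} := by
          exact Finset.sum_congr rfl fun a _ => (hfib a).symm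
      _ = Fintype.card (Tensor q n d) := h1
  have hc0 : 0 < c := by
    rcases Nat.eq_zero_or_pos c with h | h
    · exfalso
      have := hqc
      rw [h, mul_zero] at this
      have hpos : 0 < Fintype.card (Tensor q n d) := Fintype.card_pos
      omega
    · exact h
  -- fibers of the vector map
  have hfibvec : ∀ w : Fin m → ZMod q,
      Fintype.card {M : Fin m → Tensor q n d // (fun k => L (M k)) = w} = c ^ m := by
    intro w
    have e1 : {M : Fin m → Tensor q n d // (fun k => L (M k)) = w} ≃
        {M : Fin m → Tensor q n d // ∀ k, L (M k) = w k} :=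
      Equiv.subtypeEquivRight fun M => funext_iff
    have e2 : {M : Fin m → Tensor q n d // ∀ k, L (M k) = w k} ≃
        ∀ k : Fin m, {x : Tensor q n d // L x = w k} :=
      Equiv.subtypePiEquivPi (p := fun (k : Fin m) (x : Tensor q n d) => L x = w k)
    rw [Fintype.card_congr (e1.trans e2), Fintype.card_pi]
    simp only [hfib]
    rw [Finset.prod_const, Finset.card_univ, Fintype.card_fin]
  -- rewrite the hamming distance
  have hHD : ∀ (M : Fin m → Tensor q n d) (z : Fin m → ZMod q),
      hammingDist (fun k => tinner (M k) T) (fun k => tinner (M k) Tstar + z k)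
        = hammingDist (fun k => L (M k)) z := by
    intro M z
    simp only [hammingDist]
    congr 1
    apply Finset.filter_congr
    intro k _
    rw [not_iff_not, hLdef]
    exact sub_eq_iff_eq_add'.symm
  -- the Chernoff bound for the counting sum
  have hcount : ∀ z : Fin m → ZMod q,
      ∑ w : Fin m → ZMod q, (if hammingDist w z ≤ τ then (1 : ℝ) else 0)
        ≤ (q : ℝ) ^ m * E := by
    intro z
    have step1 : ∑ w : Fin m → ZMod q, (if hammingDist w z ≤ τ then (1 : ℝ) else 0)
        ≤ ∑ w : Fin m → ZMod q, Real.exp (s * τ) *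
            ∏ k, Real.exp (-(s * (if w k ≠ z k then (1 : ℝ) else 0))) := by
      refine Finset.sum_le_sum fun w _ => ?_
      have hprod : Real.exp (s * τ) * ∏ k, Real.exp (-(s * (if w k ≠ z k then (1 : ℝ) else 0)))
          = Real.exp (s * τ - s * (hammingDist w z : ℝ)) := by
        rw [← Real.exp_sum, ← Real.exp_add]
        congr 1
        have hcast : (hammingDist w z : ℝ) = ∑ k, (if w k ≠ z k then (1 : ℝ) else 0) := by
          unfold hammingDist
          rw [Finset.card_filter]
          push_cast
          rfl
        rw [hcast, Finset.mul_sum, Finset.sum_neg_distrib]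
        ring
      rw [hprod]
      split_ifs with h
      · apply Real.one_le_exp
        have : (hammingDist w z : ℝ) ≤ (τ : ℝ) := by exact_mod_cast h
        nlinarith
      · positivity
    refine step1.trans ?_
    rw [← Finset.mul_sum]
    have step2 : ∑ w : Fin m → ZMod q, ∏ k, Real.exp (-(s * (if w k ≠ z k then (1 : ℝ) else 0)))
        = ∏ k : Fin m, ∑ a : ZMod q, Real.exp (-(s * (if a ≠ z k then (1 : ℝ) else 0))) := by
      exact sum_prod_univ fun k a => Real.exp (-(s * (if a ≠ z k then (1 : ℝ) else 0)))
    rw [step2]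
    have step3 : ∀ k : Fin m, ∑ a : ZMod q, Real.exp (-(s * (if a ≠ z k then (1 : ℝ) else 0)))
        = 1 + ((q : ℝ) - 1) * Real.exp (-s) := by
      intro k
      rw [← Finset.add_sum_erase _ _ (Finset.mem_univ (z k))]
      have h1 : Real.exp (-(s * (if z k ≠ z k then (1 : ℝ) else 0))) = 1 := by simp
      have h2 : ∑ a ∈ Finset.univ.erase (z k),
          Real.exp (-(s * (if a ≠ z k then (1 : ℝ) else 0))) = ((q : ℝ) - 1) * Real.exp (-s) := by
        rw [Finset.sum_congr rfl (fun a ha => ?_), Finset.sum_const,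
          Finset.card_erase_of_mem (Finset.mem_univ _), Finset.card_univ, ZMod.card,
          nsmul_eq_mul]
        · have : ((q - 1 : ℕ) : ℝ) = (q : ℝ) - 1 := by
            have : 1 ≤ q := hqp.one_lt.le
            push_cast [this]
            ring
          rw [this]
        · have : a ≠ z k := Finset.ne_of_mem_erase ha
          simp [this]
      rw [h1, h2]
    rw [Finset.prod_congr rfl fun k _ => step3 k, Finset.prod_const, Finset.card_univ,
      Fintype.card_fin]
    have hbern : 1 + ((q : ℝ) - 1) * Real.exp (-s)
        ≤ (q : ℝ) * Real.exp (-(s * p) + s ^ 2 / 8) := by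
      have := bern_mgf p s hp0 hp1 hs0
      have hrw : (q : ℝ) * (p * Real.exp (-s) + (1 - p)) = 1 + ((q : ℝ) - 1) * Real.exp (-s) := by
        rw [hpdef]
        field_simp
        ring
      nlinarith [Real.exp_pos (-(s * p) + s ^ 2 / 8)]
    have hLHSnn : (0 : ℝ) ≤ 1 + ((q : ℝ) - 1) * Real.exp (-s) := by
      have := Real.exp_pos (-s)
      nlinarith
    calc Real.exp (s * τ) * (1 + ((q : ℝ) - 1) * Real.exp (-s)) ^ m
        ≤ Real.exp (s * τ) * ((q : ℝ) * Real.exp (-(s * p) + s ^ 2 / 8)) ^ m := by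
          apply mul_le_mul_of_nonneg_left _ (Real.exp_pos _).le
          exact pow_le_pow_left₀ hLHSnn hbern m
      _ = (q : ℝ) ^ m * (Real.exp (s * τ) * Real.exp (-(s * p) + s ^ 2 / 8) ^ m) := by
          rw [mul_pow]; ring
      _ = (q : ℝ) ^ m * E := by
          congr 1
          rw [← Real.exp_nat_mul, ← Real.exp_add, hEdef]
          congr 1
          have hμτ : s = 4 * (μ - τ) / m := hsdef
          rw [hμp] at hμτ ⊢
          rw [hsdef, hμp]
          field_simp
          ring
  -- noise weights
  have hnw0 : ∀ a : ZMod q, 0 ≤ noiseW q ε a := by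
    intro a
    unfold noiseW
    split_ifs
    · linarith
    · apply div_nonneg hε0
      linarith
  have hnwsum : ∑ a : ZMod q, noiseW q ε a = 1 := by
    rw [← Finset.add_sum_erase _ _ (Finset.mem_univ (0 : ZMod q))]
    have h1 : noiseW q ε 0 = 1 - ε := by simp [noiseW]
    have h2 : ∑ a ∈ Finset.univ.erase (0 : ZMod q), noiseW q ε a = ε := by
      have hconst : ∀ a ∈ Finset.univ.erase (0 : ZMod q), noiseW q ε a = ε / ((q : ℝ) - 1) := by
        intro a ha
        have : a ≠ 0 := Finset.ne_of_mem_erase ha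
        simp [noiseW, this]
      rw [Finset.sum_congr rfl hconst, Finset.sum_const,
        Finset.card_erase_of_mem (Finset.mem_univ _), Finset.card_univ, ZMod.card, nsmul_eq_mul]
      have hcast : ((q - 1 : ℕ) : ℝ) = (q : ℝ) - 1 := by
        have h1q : 1 ≤ q := hqp.one_lt.le
        push_cast [h1q]
        ring
      rw [hcast]
      have hne : (q : ℝ) - 1 ≠ 0 := by linarith
      field_simp
    rw [h1, h2]
    ring
  have hnwprod : ∑ z : Fin m → ZMod q, ∏ k, noiseW q ε (z k) = 1 := by
    rw [sum_prod_univ fun (_ : Fin m) (a : ZMod q) => noiseW q ε a]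
    rw [Finset.prod_congr rfl fun k _ => hnwsum]
    simp
  -- assembly
  have hQ : (Fintype.card (Tensor q n d) : ℝ) ^ m = (q : ℝ) ^ m * (c : ℝ) ^ m := by
    rw [← hqc]
    push_cast
    rw [mul_pow]
  have hQpos : (0 : ℝ) < (Fintype.card (Tensor q n d) : ℝ) ^ m := by
    have : 0 < Fintype.card (Tensor q n d) := Fintype.card_pos
    positivity
  rw [div_le_iff₀ hQpos]
  have hE0 : 0 ≤ E := (Real.exp_pos _).le
  calc ∑ M : Fin m → Tensor q n d, ∑ z : Fin m → ZMod q,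
        (∏ k, noiseW q ε (z k)) *
          (if hammingDist (fun k => tinner (M k) T)
              (fun k => tinner (M k) Tstar + z k) ≤ τ then 1 else 0)
      = ∑ z : Fin m → ZMod q, (∏ k, noiseW q ε (z k)) *
          ((c : ℝ) ^ m * ∑ w : Fin m → ZMod q, (if hammingDist w z ≤ τ then (1 : ℝ) else 0)) := by
        rw [Finset.sum_comm]
        refine Finset.sum_congr rfl fun z _ => ?_
        rw [← Finset.mul_sum]
        congr 1
        have := sum_comp_const_fiber (fun (M : Fin m → Tensor q n d) (k : Fin m) => L (M k))
          (fun w => if hammingDist w z ≤ τ then (1 : ℝ) else 0) (c ^ m) hfibvec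
        push_cast at this
        rw [← this]
        exact Finset.sum_congr rfl fun M _ => by rw [hHD]
    _ ≤ ∑ z : Fin m → ZMod q, (∏ k, noiseW q ε (z k)) *
          ((c : ℝ) ^ m * ((q : ℝ) ^ m * E)) := by
        refine Finset.sum_le_sum fun z _ => ?_
        apply mul_le_mul_of_nonneg_left _ (Finset.prod_nonneg fun k _ => hnw0 _)
        apply mul_le_mul_of_nonneg_left (hcount z) (by positivity)
    _ = (c : ℝ) ^ m * ((q : ℝ) ^ m * E) := by
        rw [← Finset.sum_mul, hnwprod, one_mul]
    _ = E * (Fintype.card (Tensor q n d) : ℝ) ^ m := by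
        rw [hQ]; ring
end
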